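/- Let A be a rank-r matrix with SVD A = UΣVᴴ (Σ ∈ ℝ^{r×r} positive diagonal). Then every matrix of the form G = UVᴴ + W with UᴴW = 0, WV = 0, and ‖W‖ ≤ 1 is a subgradient of the nuclear norm at A: for all Z, ‖Z‖_* ≥ ‖A‖_* + ⟨Z − A, G⟩_F. -/

import Mathlib

open Matrix

/-- Frobenius inner product of real square matrices. -/
def frobInner {n : ℕ} (A B : Matrix (Fin n) (Fin n) ℝ) : ℝ :=
  ∑ i, ∑ j, A i j * B i j

/-- Spectral (ℓ₂ operator) norm. -/
noncomputable def specNorm {n : ℕ} (A : Matrix (Fin n) (Fin n) ℝ) : ℝ :=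
  sSup ((fun x => Real.sqrt (∑ i, (A.mulVec x i) ^ 2)) ''
    {x : Fin n → ℝ | ∑ i, (x i) ^ 2 ≤ 1})

/-- Nuclear norm: trace of the positive semidefinite square root of `Aᴴ * A`. -/
noncomputable def nucNorm {n : ℕ} (A : Matrix (Fin n) (Fin n) ℝ) : ℝ :=
  ((Matrix.posSemidef_conjTranspose_mul_self A).1.eigenvectorUnitary.1 *
    diagonal ((RCLike.ofReal : ℝ → ℝ) ∘ Real.sqrt ∘ (Matrix.posSemidef_conjTranspose_mul_self A).1.eigenvalues) *
    (star (Matrix.posSemidef_conjTranspose_mul_self A).1.eigenvectorUnitary : Matrix (Fin n) (Fin n) ℝ)).trace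


lemma sumsq_eq_dot {n : ℕ} (v : Fin n → ℝ) : ∑ i, v i ^ 2 = v ⬝ᵥ v := by
  simp [dotProduct, sq]

lemma dot_mulVec_left {m n : ℕ} (A : Matrix (Fin m) (Fin n) ℝ) (v : Fin n → ℝ)
    (w : Fin m → ℝ) : (A *ᵥ v) ⬝ᵥ w = v ⬝ᵥ (Aᵀ *ᵥ w) := by
  simp only [dotProduct, mulVec, transpose_apply, Finset.sum_mul, Finset.mul_sum]
  rw [Finset.sum_comm]
  exact Finset.sum_congr rfl fun j _ => Finset.sum_congr rfl fun l _ => by ring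

lemma frobInner_eq_trace {n : ℕ} (A B : Matrix (Fin n) (Fin n) ℝ) :
    frobInner A B = (Aᵀ * B).trace := by
  rw [trace]
  simp only [frobInner, diag_apply, mul_apply, transpose_apply]
  rw [Finset.sum_comm]

lemma diag_entry {n : ℕ} (M P : Matrix (Fin n) (Fin n) ℝ) (k : Fin n) :
    (Pᵀ * M * P) k k = (fun j => P j k) ⬝ᵥ (M *ᵥ (fun j => P j k)) := by
  simp only [mul_apply, transpose_apply, dotProduct, mulVec, Finset.sum_mul, Finset.mul_sum]
  rw [Finset.sum_comm]
  exact Finset.sum_congr rfl fun j _ => Finset.sum_congr rfl fun l _ => by ring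
lemma specNorm_mulVec_le {n : ℕ} (W : Matrix (Fin n) (Fin n) ℝ) (hW : specNorm W ≤ 1)
    (x : Fin n → ℝ) : ∑ i, (W.mulVec x i) ^ 2 ≤ ∑ i, x i ^ 2 := by
  have hbdd : BddAbove ((fun x => Real.sqrt (∑ i, (W.mulVec x i) ^ 2)) ''
      {x : Fin n → ℝ | ∑ i, (x i) ^ 2 ≤ 1}) := by
    refine ⟨Real.sqrt (∑ i, ∑ j, W i j ^ 2), ?_⟩
    rintro _ ⟨y, hy, rfl⟩
    apply Real.sqrt_le_sqrt
    refine Finset.sum_le_sum fun i _ => ?_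
    have h1 : (W.mulVec y i) ^ 2 ≤ (∑ j, W i j ^ 2) * ∑ j, (y j) ^ 2 := by
      simpa [mulVec, dotProduct] using
        Finset.sum_mul_sq_le_sq_mul_sq Finset.univ (fun j => W i j) y
    have h2 : (∑ j, W i j ^ 2) * ∑ j, (y j) ^ 2 ≤ (∑ j, W i j ^ 2) * 1 := by
      apply mul_le_mul_of_nonneg_left hy
      exact Finset.sum_nonneg fun j _ => sq_nonneg _
    calc (W.mulVec y i) ^ 2 ≤ _ := h1
      _ ≤ _ := h2
      _ = ∑ j, W i j ^ 2 := mul_one _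
  -- unit-ball case
  have key : ∀ y : Fin n → ℝ, ∑ i, (y i) ^ 2 ≤ 1 → ∑ i, (W.mulVec y i) ^ 2 ≤ 1 := by
    intro y hy
    have h1 : Real.sqrt (∑ i, (W.mulVec y i) ^ 2) ≤ 1 :=
      le_trans (le_csSup hbdd ⟨y, hy, rfl⟩) hW
    have h2 : (0:ℝ) ≤ ∑ i, (W.mulVec y i) ^ 2 := Finset.sum_nonneg fun i _ => sq_nonneg _
    calc ∑ i, (W.mulVec y i) ^ 2 = Real.sqrt (∑ i, (W.mulVec y i) ^ 2) ^ 2 :=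
          (Real.sq_sqrt h2).symm
      _ ≤ 1 ^ 2 := by
          apply pow_le_pow_left₀ (Real.sqrt_nonneg _) h1
      _ = 1 := one_pow _
  set S := ∑ i, x i ^ 2 with hS
  have hS0 : 0 ≤ S := Finset.sum_nonneg fun i _ => sq_nonneg _
  rcases eq_or_lt_of_le hS0 with h0 | hpos
  · -- S = 0, so x = 0
    have hx : x = 0 := by
      funext i
      have : x i ^ 2 = 0 := by
        have := (Finset.sum_eq_zero_iff_of_nonneg
          (fun i (_ : i ∈ Finset.univ) => sq_nonneg (x i))).mp h0.symm i (Finset.mem_univ i)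
        exact this
      exact pow_eq_zero_iff (two_ne_zero) |>.mp this
    rw [hx, mulVec_zero]
    simpa using hS0
  · set c : ℝ := (Real.sqrt S)⁻¹ with hc
    have hsq : Real.sqrt S > 0 := Real.sqrt_pos.mpr hpos
    have hc2 : c ^ 2 * S = 1 := by
      rw [hc, inv_pow, Real.sq_sqrt hS0, inv_mul_cancel₀ (ne_of_gt hpos)]
    have hy : ∑ i, ((c • x) i) ^ 2 ≤ 1 := by
      have : ∑ i, ((c • x) i) ^ 2 = c ^ 2 * S := by
        rw [hS, Finset.mul_sum]
        exact Finset.sum_congr rfl fun i _ => by simp [mul_pow]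
      rw [this, hc2]
    have hk := key (c • x) hy
    have hWc : ∀ i, W.mulVec (c • x) i = c * W.mulVec x i := by
      intro i; rw [mulVec_smul]; rfl
    have hsum : ∑ i, (W.mulVec (c • x) i) ^ 2 = c ^ 2 * ∑ i, (W.mulVec x i) ^ 2 := by
      rw [Finset.mul_sum]
      exact Finset.sum_congr rfl fun i _ => by rw [hWc i]; ring
    rw [hsum] at hk
    have hcpos : 0 < c ^ 2 := by positivity
    calc ∑ i, (W.mulVec x i) ^ 2 = (c ^ 2)⁻¹ * (c ^ 2 * ∑ i, (W.mulVec x i) ^ 2) := by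
          rw [← mul_assoc, inv_mul_cancel₀ hcpos.ne', one_mul]
      _ ≤ (c ^ 2)⁻¹ * 1 := by
          apply mul_le_mul_of_nonneg_left hk (le_of_lt (by positivity))
      _ = S := by
          rw [mul_one, hc, inv_pow, Real.sq_sqrt hS0, inv_inv]
lemma G_contract {n r : ℕ} (U V : Matrix (Fin n) (Fin r) ℝ)
    (hU : Uᵀ * U = 1) (hV : Vᵀ * V = 1)
    (W : Matrix (Fin n) (Fin n) ℝ)
    (hUW : Uᵀ * W = 0) (hWV : W * V = 0) (hW : specNorm W ≤ 1)
    (G : Matrix (Fin n) (Fin n) ℝ) (hG : G = U * Vᵀ + W)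
    (x : Fin n → ℝ) : ∑ i, (G.mulVec x i) ^ 2 ≤ ∑ i, x i ^ 2 := by
  set a : Fin r → ℝ := Vᵀ *ᵥ x with ha
  set u : Fin n → ℝ := U *ᵥ a with hu
  set w : Fin n → ℝ := W *ᵥ x with hw
  have hGx : G *ᵥ x = u + w := by
    rw [hG, add_mulVec, ← mulVec_mulVec]
  have huu : u ⬝ᵥ u = a ⬝ᵥ a := by
    rw [hu, dot_mulVec_left, mulVec_mulVec, hU, one_mulVec]
  have huw : u ⬝ᵥ w = 0 := by
    rw [hu, hw, dot_mulVec_left, mulVec_mulVec, hUW, zero_mulVec, dotProduct_zero]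
  have hxa : x ⬝ᵥ (V *ᵥ a) = a ⬝ᵥ a := by
    rw [dotProduct_comm, dot_mulVec_left, ha]
  have hVaVa : (V *ᵥ a) ⬝ᵥ (V *ᵥ a) = a ⬝ᵥ a := by
    rw [dot_mulVec_left, mulVec_mulVec, hV, one_mulVec]
  set x' : Fin n → ℝ := x - V *ᵥ a with hx'
  have hwx' : W *ᵥ x' = w := by
    rw [hx', mulVec_sub, mulVec_mulVec, hWV, zero_mulVec, sub_zero, hw]
  have hx'x' : x' ⬝ᵥ x' = x ⬝ᵥ x - a ⬝ᵥ a := by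
    rw [hx', sub_dotProduct, dotProduct_sub, dotProduct_sub, hxa, hVaVa,
      dotProduct_comm (V *ᵥ a) x, hxa]
    ring
  have hww : w ⬝ᵥ w ≤ x' ⬝ᵥ x' := by
    rw [← hwx', ← sumsq_eq_dot, ← sumsq_eq_dot]
    exact specNorm_mulVec_le W hW x'
  calc ∑ i, (G.mulVec x i) ^ 2 = (u + w) ⬝ᵥ (u + w) := by rw [sumsq_eq_dot, hGx]
    _ = u ⬝ᵥ u + 2 * (u ⬝ᵥ w) + w ⬝ᵥ w := by
        rw [add_dotProduct, dotProduct_add, dotProduct_add, dotProduct_comm w u]; ring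
    _ = a ⬝ᵥ a + w ⬝ᵥ w := by rw [huu, huw]; ring
    _ ≤ a ⬝ᵥ a + (x ⬝ᵥ x - a ⬝ᵥ a) := by
        have := hww.trans_eq hx'x'
        linarith
    _ = ∑ i, x i ^ 2 := by rw [sumsq_eq_dot]; ring
lemma frobInner_comm {n : ℕ} (A B : Matrix (Fin n) (Fin n) ℝ) :
    frobInner A B = frobInner B A := by
  simp [frobInner, mul_comm]

lemma dual_le {n : ℕ} (Z G : Matrix (Fin n) (Fin n) ℝ)
    (hGc : ∀ x : Fin n → ℝ, ∑ i, (G.mulVec x i) ^ 2 ≤ ∑ i, x i ^ 2) :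
    frobInner Z G ≤ nucNorm Z := by
  have hH := Matrix.posSemidef_conjTranspose_mul_self Z
  have hHerm := hH.1
  set P : Matrix (Fin n) (Fin n) ℝ :=
    ((hHerm.eigenvectorUnitary : unitaryGroup (Fin n) ℝ) : Matrix (Fin n) (Fin n) ℝ) with hP
  set d : Fin n → ℝ := hHerm.eigenvalues with hd
  have h1 : star P * P = 1 := Matrix.mem_unitaryGroup_iff'.mp hHerm.eigenvectorUnitary.2
  have h2 : P * star P = 1 := Matrix.mem_unitaryGroup_iff.mp hHerm.eigenvectorUnitary.2
  have h3 : star P = Pᵀ := Matrix.conjTranspose_eq_transpose_of_trivial P ▸ rfl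
  have h4 : Zᴴ * Z = P * diagonal (RCLike.ofReal ∘ d) * star P := hHerm.spectral_theorem
  have h5 : diagonal (RCLike.ofReal ∘ d) = diagonal d := by norm_num
  have hd0 : ∀ k, 0 ≤ d k := fun k => hH.eigenvalues_nonneg k
  have hZT : Zᴴ = Zᵀ := Matrix.conjTranspose_eq_transpose_of_trivial Z
  -- nuclear norm as sum of sqrt eigenvalues
  have h6 : P * diagonal ((RCLike.ofReal : ℝ → ℝ) ∘ Real.sqrt ∘ d) * star P =
      P * diagonal ((RCLike.ofReal : ℝ → ℝ) ∘ Real.sqrt ∘ d) * star P := rfl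
  have hnuc : nucNorm Z = ∑ k, Real.sqrt (d k) := by
    show (P * diagonal ((RCLike.ofReal : ℝ → ℝ) ∘ Real.sqrt ∘ d) * star P).trace = _
    rw [h6, trace_mul_comm, ← mul_assoc, h1, one_mul, trace_diagonal]
    simp [Function.comp]
  -- diagonalization
  have hdiag : Pᵀ * (Zᴴ * Z) * P = diagonal d := by
    rw [← h3, h4]
    simp only [mul_assoc]
    rw [h1, mul_one, ← mul_assoc, h1, one_mul, h5]
  set q : Fin n → (Fin n → ℝ) := fun k => (fun j => P j k) with hq
  have hq1 : ∀ k, q k ⬝ᵥ q k = 1 := by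
    intro k
    have e1 := diag_entry (1 : Matrix (Fin n) (Fin n) ℝ) P k
    rw [mul_one, ← h3, h1, one_mulVec] at e1
    show (fun j => P j k) ⬝ᵥ (fun j => P j k) = 1
    rw [← e1]
    simp [Matrix.one_apply]
  have hZk : ∀ k, (Z *ᵥ q k) ⬝ᵥ (Z *ᵥ q k) = d k := by
    intro k
    show (Z *ᵥ (fun j => P j k)) ⬝ᵥ (Z *ᵥ (fun j => P j k)) = d k
    rw [dot_mulVec_left, mulVec_mulVec, ← diag_entry, ← hZT, hdiag]
    simp
  have hfrob : frobInner Z G = ∑ k, (G *ᵥ q k) ⬝ᵥ (Z *ᵥ q k) := by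
    have htr : (Pᵀ * (Gᵀ * Z) * P).trace = (Gᵀ * Z).trace := by
      rw [trace_mul_comm, ← mul_assoc, ← h3, h2, one_mul]
    have e2 : (Pᵀ * (Gᵀ * Z) * P).trace = ∑ k, (G *ᵥ q k) ⬝ᵥ (Z *ᵥ q k) := by
      rw [trace]
      refine Finset.sum_congr rfl fun k _ => ?_
      show (Pᵀ * (Gᵀ * Z) * P) k k = (G *ᵥ (fun j => P j k)) ⬝ᵥ (Z *ᵥ (fun j => P j k))
      rw [diag_entry, ← mulVec_mulVec, ← dot_mulVec_left]
    rw [frobInner_comm, frobInner_eq_trace, ← htr, e2]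
  rw [hfrob, hnuc]
  refine Finset.sum_le_sum fun k _ => ?_
  set g := G *ᵥ q k with hg
  set z := Z *ᵥ q k with hz
  have hgg : g ⬝ᵥ g ≤ 1 := by
    rw [← sumsq_eq_dot]
    calc ∑ i, g i ^ 2 ≤ ∑ i, q k i ^ 2 := hGc (q k)
      _ = q k ⬝ᵥ q k := sumsq_eq_dot _
      _ = 1 := hq1 k
  have hgg0 : 0 ≤ g ⬝ᵥ g := by
    rw [← sumsq_eq_dot]; exact Finset.sum_nonneg fun i _ => sq_nonneg _
  have hzz0 : 0 ≤ z ⬝ᵥ z := by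
    rw [← sumsq_eq_dot]; exact Finset.sum_nonneg fun i _ => sq_nonneg _
  have hcs : (g ⬝ᵥ z) ^ 2 ≤ (g ⬝ᵥ g) * (z ⬝ᵥ z) := by
    have := Finset.sum_mul_sq_le_sq_mul_sq Finset.univ g z
    simpa [dotProduct, sq] using this
  calc g ⬝ᵥ z ≤ |g ⬝ᵥ z| := le_abs_self _
    _ = Real.sqrt ((g ⬝ᵥ z) ^ 2) := (Real.sqrt_sq_eq_abs _).symm
    _ ≤ Real.sqrt ((g ⬝ᵥ g) * (z ⬝ᵥ z)) := Real.sqrt_le_sqrt hcs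
    _ = Real.sqrt (g ⬝ᵥ g) * Real.sqrt (z ⬝ᵥ z) := Real.sqrt_mul hgg0 _
    _ ≤ 1 * Real.sqrt (z ⬝ᵥ z) := by
        apply mul_le_mul_of_nonneg_right _ (Real.sqrt_nonneg _)
        calc Real.sqrt (g ⬝ᵥ g) ≤ Real.sqrt 1 := Real.sqrt_le_sqrt hgg
          _ = 1 := Real.sqrt_one
    _ = Real.sqrt (d k) := by rw [one_mul, hz, hZk k]
open scoped MatrixOrder in
lemma nucNorm_eq_trace_of_sq {n : ℕ} (A B : Matrix (Fin n) (Fin n) ℝ) (hB : B.PosSemidef)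
    (h : B ^ 2 = Aᴴ * A) : nucNorm A = B.trace := by
  have hp := Matrix.posSemidef_conjTranspose_mul_self A
  have e := (CFC.sqrt_eq_iff (Aᴴ * A) B hp.nonneg hB.nonneg).mpr (by rw [← h, pow_two])
  rw [← e, CFC.sqrt_eq_real_sqrt (Aᴴ * A) hp.nonneg, cfcₙ_eq_cfc, hp.1.cfc_eq,
    IsHermitian.cfc, Unitary.conjStarAlgAut_apply]
  rfl
theorem nuclear_norm_subgradient (n r : ℕ)
    (U V : Matrix (Fin n) (Fin r) ℝ) (hU : Uᵀ * U = 1) (hV : Vᵀ * V = 1)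
    (σ : Fin r → ℝ) (hσ : ∀ i, 0 < σ i)
    (A : Matrix (Fin n) (Fin n) ℝ) (hA : A = U * Matrix.diagonal σ * Vᵀ)
    (W : Matrix (Fin n) (Fin n) ℝ)
    (hUW : Uᵀ * W = 0) (hWV : W * V = 0) (hW : specNorm W ≤ 1)
    (G : Matrix (Fin n) (Fin n) ℝ) (hG : G = U * Vᵀ + W) :
    ∀ Z : Matrix (Fin n) (Fin n) ℝ,
      nucNorm Z ≥ nucNorm A + frobInner (Z - A) G := by
  intro Z
  set D : Matrix (Fin r) (Fin r) ℝ := Matrix.diagonal σ with hD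
  have hσ0 : ∀ i, 0 ≤ σ i := fun i => (hσ i).le
  -- trace of V * (D * Vᵀ)
  have htrV : (V * (D * Vᵀ)).trace = ∑ i, σ i := by
    rw [← Matrix.mul_assoc, trace_mul_comm, ← Matrix.mul_assoc, hV, Matrix.one_mul, hD,
      trace_diagonal]
  -- B := V * D * Vᵀ is the psd sqrt of Aᴴ * A
  set E : Matrix (Fin r) (Fin r) ℝ := Matrix.diagonal (fun i => Real.sqrt (σ i)) with hE
  have hEE : E * E = D := by
    have hfun : (fun i => Real.sqrt (σ i) * Real.sqrt (σ i)) = σ :=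
      funext fun i => Real.mul_self_sqrt (hσ0 i)
    rw [hE, diagonal_mul_diagonal, hfun, hD]
  set C : Matrix (Fin r) (Fin n) ℝ := E * Vᵀ with hC
  have hCH : Cᴴ = V * E := by
    rw [Matrix.conjTranspose_eq_transpose_of_trivial, hC, transpose_mul,
      transpose_transpose, hE, diagonal_transpose]
  have hCC : Cᴴ * C = V * D * Vᵀ := by
    rw [hCH, hC, Matrix.mul_assoc, ← Matrix.mul_assoc E, hEE, Matrix.mul_assoc]
  have hBpsd : Matrix.PosSemidef (V * D * Vᵀ) := by
    rw [← hCC]; exact Matrix.posSemidef_conjTranspose_mul_self C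
  have hB2 : (V * D * Vᵀ) ^ 2 = Aᴴ * A := by
    rw [pow_two, hA, Matrix.conjTranspose_eq_transpose_of_trivial]
    simp only [transpose_mul, transpose_transpose, hD, diagonal_transpose,
      Matrix.mul_assoc]
    rw [show Vᵀ * (V * (Matrix.diagonal σ * Vᵀ)) = Matrix.diagonal σ * Vᵀ by
        rw [← Matrix.mul_assoc, hV, Matrix.one_mul],
      show Uᵀ * (U * (Matrix.diagonal σ * Vᵀ)) = Matrix.diagonal σ * Vᵀ by
        rw [← Matrix.mul_assoc, hU, Matrix.one_mul]]
  have hnucA : nucNorm A = ∑ i, σ i := by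
    rw [nucNorm_eq_trace_of_sq A _ hBpsd hB2, Matrix.mul_assoc, htrV]
  -- frobInner A G = ∑ σ
  have hAT : Aᵀ = V * (D * Uᵀ) := by
    rw [hA, transpose_mul, transpose_mul, transpose_transpose, hD, diagonal_transpose]
  have hAG : frobInner A G = ∑ i, σ i := by
    rw [frobInner_eq_trace, hAT, hG, mul_add]
    have e1 : V * (D * Uᵀ) * (U * Vᵀ) = V * (D * Vᵀ) := by
      rw [Matrix.mul_assoc, Matrix.mul_assoc]
      congr 1
      rw [← Matrix.mul_assoc Uᵀ U Vᵀ, hU, Matrix.one_mul]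
    have e2 : V * (D * Uᵀ) * W = 0 := by
      rw [Matrix.mul_assoc, Matrix.mul_assoc, hUW, Matrix.mul_zero, Matrix.mul_zero]
    rw [e1, e2, add_zero, htrV]
  have hdual : frobInner Z G ≤ nucNorm Z :=
    dual_le Z G (G_contract U V hU hV W hUW hWV hW G hG)
  have hsub : frobInner (Z - A) G = frobInner Z G - frobInner A G := by
    simp [frobInner, Matrix.sub_apply, sub_mul, Finset.sum_sub_distrib]
  rw [hsub, hnucA, hAG]
  linarith
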